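/- For every graph G and every c in [1/2, 1), the bramble number satisfies bn(G) <= (1/(1-c)) * sep*_c(G). -/

import Mathlib

open SimpleGraph

namespace TWPaper

/-- `(T, B)` is a tree decomposition of `G`. -/
def IsTreeDecomp {V ι : Type*} (G : SimpleGraph V) (T : SimpleGraph ι) (B : ι → Set V) : Prop :=
  T.IsTree ∧
  (∀ v w : V, G.Adj v w → ∃ x, v ∈ B x ∧ w ∈ B x) ∧
  (∀ v : V, (T.induce {x | v ∈ B x}).Connected)

/-- `G` has a tree decomposition of width at most `k`. -/
def HasTDWidthLE {V : Type*} (G : SimpleGraph V) (k : ℕ) : Prop :=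
  ∃ (ι : Type) (T : SimpleGraph ι) (B : ι → Set V),
    IsTreeDecomp G T B ∧ ∀ x, (B x).ncard ≤ k + 1

/-- Treewidth of `G`. -/
noncomputable def treewidth {V : Type*} (G : SimpleGraph V) : ℕ :=
  sInf {k | HasTDWidthLE G k}

/-- Two vertex sets touch: they intersect or an edge joins them. -/
def Touches {V : Type*} (G : SimpleGraph V) (A B : Set V) : Prop :=
  (A ∩ B).Nonempty ∨ ∃ a ∈ A, ∃ b ∈ B, G.Adj a b

/-- A bramble: a set of connected subgraphs (given by vertex sets) that pairwise touch. -/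
def IsBramble {V : Type*} (G : SimpleGraph V) (𝓑 : Set (Set V)) : Prop :=
  (∀ A ∈ 𝓑, (G.induce A).Connected) ∧ ∀ A ∈ 𝓑, ∀ B ∈ 𝓑, Touches G A B

/-- `S` hits every element of `𝓑`. -/
def IsHitting {V : Type*} (𝓑 : Set (Set V)) (S : Set V) : Prop :=
  ∀ A ∈ 𝓑, (S ∩ A).Nonempty

/-- The order of a bramble: minimum size of a hitting set. -/
noncomputable def brambleOrder {V : Type*} (𝓑 : Set (Set V)) : ℕ :=
  sInf {n | ∃ S : Set V, IsHitting 𝓑 S ∧ S.ncard = n}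

/-- The bramble number: maximum order of a bramble. -/
noncomputable def brambleNumber {V : Type*} (G : SimpleGraph V) : ℕ :=
  sSup {n | ∃ 𝓑 : Set (Set V), IsBramble G 𝓑 ∧ brambleOrder 𝓑 = n}

/-- A tangle: connected subgraphs such that any three share a vertex or
meet a common edge's endpoints. -/
def IsTangle {V : Type*} (G : SimpleGraph V) (τ : Set (Set V)) : Prop :=
  (∀ A ∈ τ, (G.induce A).Connected) ∧
  ∀ A ∈ τ, ∀ B ∈ τ, ∀ C ∈ τ,
    (∃ v, v ∈ A ∩ B ∩ C) ∨
    ∃ u v, G.Adj u v ∧ (u ∈ A ∨ v ∈ A) ∧ (u ∈ B ∨ v ∈ B) ∧ (u ∈ C ∨ v ∈ C)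

/-- The tangle number: maximum order of a tangle. -/
noncomputable def tangleNumber {V : Type*} (G : SimpleGraph V) : ℕ :=
  sSup {n | ∃ τ : Set (Set V), IsTangle G τ ∧ brambleOrder τ = n}

/-- `G - X` : delete the vertices of `X` (kept on the same vertex type,
vertices of `X` become isolated). -/
def delVerts {V : Type*} (G : SimpleGraph V) (X : Set V) : SimpleGraph V where
  Adj a b := G.Adj a b ∧ a ∉ X ∧ b ∉ X
  symm := by
    refine ⟨?_⟩
    intro a b h
    exact ⟨h.1.symm, h.2.2, h.2.1⟩
  loopless := by
    refine ⟨?_⟩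
    intro a h
    exact G.irrefl h.1

/-- The vertex set of the component of `G - X` containing `v`. -/
def comp {V : Type*} (G : SimpleGraph V) (X : Set V) (v : V) : Set V :=
  {w | (delVerts G X).Reachable v w}

/-- `X` is a `(k, S, c)`-separator of `G`. -/
def IsSeparator {V : Type*} (G : SimpleGraph V) (k : ℕ) (S : Set V) (c : ℝ) (X : Set V) : Prop :=
  X.ncard ≤ k ∧
  ∀ v ∉ X, ((comp G X v ∩ S).ncard : ℝ) ≤ c * ((S \ X).ncard : ℝ)

/-- The separation number `sep_c(G)`. -/
noncomputable def sepNum {V : Type*} (G : SimpleGraph V) (c : ℝ) : ℕ :=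
  sInf {k | ∀ S : Set V, ∃ X : Set V, IsSeparator G k S c X}

/-- `X` is a `(k, S, c)*`-separator of `G`. -/
def IsStarSeparator {V : Type*} (G : SimpleGraph V) (k : ℕ) (S : Set V) (c : ℝ) (X : Set V) :
    Prop :=
  X.ncard ≤ k ∧
  ∀ v ∉ X, ((comp G X v ∩ (S \ X)).ncard : ℝ) ≤ c * (S.ncard : ℝ)

/-- The variant separation number `sep*_c(G)`. -/
noncomputable def sepStarNum {V : Type*} (G : SimpleGraph V) (c : ℝ) : ℕ :=
  sInf {k | ∀ S : Set V, ∃ X : Set V, IsStarSeparator G k S c X}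

/-- `G` has a branch decomposition of width at most `w`. -/
def HasBDWidthLE {V : Type*} (G : SimpleGraph V) (w : ℕ) : Prop :=
  ∃ (ι : Type) (_ : Finite ι) (T : SimpleGraph ι), T.IsTree ∧
    (∀ x : ι, (T.neighborSet x).ncard = 3 ∨ (T.neighborSet x).ncard = 1) ∧
    ∃ θ : G.edgeSet ≃ {x : ι // (T.neighborSet x).ncard = 1},
      ∀ a b : ι, T.Adj a b →
        {v : V | ∃ e₁ e₂ : G.edgeSet, v ∈ e₁.1 ∧ v ∈ e₂.1 ∧
          ¬ (T.deleteEdges {s(a, b)}).Reachable (θ e₁).1 (θ e₂).1}.ncard ≤ w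

/-- Branchwidth of `G` (`0` if no branch decomposition exists). -/
noncomputable def branchwidth {V : Type*} (G : SimpleGraph V) : ℕ :=
  sInf {w | HasBDWidthLE G w}

/-- `H` is a minor of `G`, via a model of branch sets. -/
def IsMinor {W V : Type*} (H : SimpleGraph W) (G : SimpleGraph V) : Prop :=
  ∃ f : W → Set V,
    (∀ w, (G.induce (f w)).Connected) ∧
    (∀ a b, a ≠ b → Disjoint (f a) (f b)) ∧
    ∀ a b, H.Adj a b → ∃ u ∈ f a, ∃ v ∈ f b, G.Adj u v

/-- The lexicographic product `T[K_k]`. -/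
def treeLex {ι : Type*} (T : SimpleGraph ι) (k : ℕ) : SimpleGraph (ι × Fin k) where
  Adj a b := T.Adj a.1 b.1 ∨ (a.1 = b.1 ∧ a.2 ≠ b.2)
  symm := by
    refine ⟨?_⟩
    rintro a b (h | ⟨h1, h2⟩)
    · exact Or.inl h.symm
    · exact Or.inr ⟨h1.symm, h2.symm⟩
  loopless := by
    refine ⟨?_⟩
    rintro a (h | ⟨h1, h2⟩)
    · exact T.irrefl h
    · exact h2 rfl

/-- The lexicographic tree product number. -/
noncomputable def ltp {V : Type*} (G : SimpleGraph V) : ℕ :=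
  sInf {k | ∃ (ι : Type) (T : SimpleGraph ι), T.IsTree ∧ IsMinor G (treeLex T k)}

/-- The cartesian tree product number. -/
noncomputable def ctp {V : Type*} (G : SimpleGraph V) : ℕ :=
  sInf {k | ∃ (ι : Type) (T : SimpleGraph ι), T.IsTree ∧
    IsMinor G (T.boxProd (completeGraph (Fin k)))}

/-- `S` is `k`-linked in `G`. -/
def IsLinked {V : Type*} (G : SimpleGraph V) (k : ℕ) (S : Set V) : Prop :=
  ∀ X : Set V, X.ncard < k → ∃ v, v ∉ X ∧ S.ncard < 2 * (comp G X v ∩ S).ncard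

/-- The linkedness of `G`: maximum `k ≥ 1` for which `G` has a `k`-linked set. -/
noncomputable def linkedness {V : Type*} (G : SimpleGraph V) : ℕ :=
  sSup {k | 0 < k ∧ ∃ S : Set V, IsLinked G k S}

/-- `S` is well-linked in `G`. -/
def WellLinked {V : Type*} (G : SimpleGraph V) (S : Set V) : Prop :=
  ∀ A B : Finset V, ↑A ⊆ S → ↑B ⊆ S → A.card = B.card →
    ∃ (σ : A ≃ B) (p : ∀ a : A, G.Walk (a : V) ((σ a : V))),
      (∀ a, (p a).IsPath) ∧
      ∀ a a' : A, a ≠ a' → ∀ v, v ∈ (p a).support → v ∉ (p a').support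

/-- `S` is externally-well-linked in `G`: the linking paths can be chosen with
no internal vertices in `S`. -/
def ExternallyWellLinked {V : Type*} (G : SimpleGraph V) (S : Set V) : Prop :=
  ∀ A B : Finset V, ↑A ⊆ S → ↑B ⊆ S → A.card = B.card →
    ∃ (σ : A ≃ B) (p : ∀ a : A, G.Walk (a : V) ((σ a : V))),
      (∀ a, (p a).IsPath) ∧
      (∀ a a' : A, a ≠ a' → ∀ v, v ∈ (p a).support → v ∉ (p a').support) ∧
      ∀ a : A, ∀ v ∈ (p a).support, v ∈ S → v = (a : V) ∨ v = ((σ a : V))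

/-- The well-linked number of `G`. -/
noncomputable def wellLinkedNum {V : Type*} (G : SimpleGraph V) : ℕ :=
  sSup {n | ∃ S : Set V, WellLinked G S ∧ S.ncard = n}

/-- A graph is chordal if every cycle of length at least 4 has a chord
(equivalently, there is no induced cycle of length at least four). -/
def Chordal {V : Type*} (H : SimpleGraph V) : Prop :=
  ∀ (v : V) (c : H.Walk v v), c.IsCycle → 4 ≤ c.length →
    ∃ a b, a ∈ c.support ∧ b ∈ c.support ∧ H.Adj a b ∧ s(a, b) ∉ c.edges

/-- `G` is a `k`-tree. -/
inductive IsKTree (k : ℕ) : ∀ (V : Type), SimpleGraph V → Prop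
  | base (V : Type) (G : SimpleGraph V) (h : Nonempty (G ≃g completeGraph (Fin (k + 1)))) :
      IsKTree k V G
  | step (V : Type) (G : SimpleGraph V) (v : V)
      (hdeg : (G.neighborSet v).ncard = k)
      (hcl : G.IsClique (G.neighborSet v))
      (h : IsKTree k ↥{u : V | u ≠ v} (G.induce {u : V | u ≠ v})) :
      IsKTree k V G

/-- The `k × k` grid graph. -/
def grid (k : ℕ) : SimpleGraph (Fin k × Fin k) where
  Adj a b := (a.1 = b.1 ∧ (a.2.val + 1 = b.2.val ∨ b.2.val + 1 = a.2.val)) ∨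
             (a.2 = b.2 ∧ (a.1.val + 1 = b.1.val ∨ b.1.val + 1 = a.1.val))
  symm := by
    refine ⟨?_⟩
    rintro a b (⟨h1, h2⟩ | ⟨h1, h2⟩)
    · exact Or.inl ⟨h1.symm, h2.symm⟩
    · exact Or.inr ⟨h1.symm, h2.symm⟩
  loopless := by
    refine ⟨?_⟩
    rintro a (⟨h1, h2⟩ | ⟨h1, h2⟩) <;> omega

lemma reach_of_connected {V : Type} (G : SimpleGraph V) (X A : Set V)
    (hA : (G.induce A).Connected) (hAX : ∀ x ∈ A, x ∉ X)
    {a b : V} (ha : a ∈ A) (hb : b ∈ A) : (delVerts G X).Reachable a b := by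
  let f : G.induce A →g delVerts G X :=
    { toFun := Subtype.val
      map_rel' := by
        rintro ⟨u, hu⟩ ⟨w, hw⟩ h
        exact ⟨h, hAX u hu, hAX w hw⟩ }
  exact (hA.preconnected ⟨a, ha⟩ ⟨b, hb⟩).map f

/-- bn(G) ≤ (1/(1-c)) · sep*_c(G) for all c ∈ [1/2, 1). -/
theorem brambleNumber_le_sepStar {V : Type} [Fintype V] (G : SimpleGraph V)
    (c : ℝ) (hc1 : 1 / 2 ≤ c) (hc2 : c < 1) :
    (brambleNumber G : ℝ) ≤ (1 / (1 - c)) * (sepStarNum G c : ℝ) := by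
  set k := sepStarNum G c with hk
  have hpos : (0:ℝ) < 1 - c := by linarith
  have hksep : ∀ S : Set V, ∃ X : Set V, IsStarSeparator G k S c X := by
    have hne : {m | ∀ S : Set V, ∃ X : Set V, IsStarSeparator G m S c X}.Nonempty := by
      refine ⟨Fintype.card V, fun S => ⟨Set.univ, ?_, ?_⟩⟩
      · simpa using (Set.ncard_univ V).le
      · intro v hv; exact absurd (Set.mem_univ v) hv
    exact Nat.sInf_mem hne
  have key : ∀ 𝓑 : Set (Set V), IsBramble G 𝓑 →
      (brambleOrder 𝓑 : ℝ) ≤ (1/(1-c)) * (k:ℝ) := by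
    intro 𝓑 h𝓑
    have hSne : {n | ∃ S : Set V, IsHitting 𝓑 S ∧ S.ncard = n}.Nonempty := by
      refine ⟨(Set.univ : Set V).ncard, Set.univ, ?_, rfl⟩
      intro A hA
      obtain ⟨⟨a, haA⟩⟩ := (h𝓑.1 A hA).nonempty
      exact ⟨a, Set.mem_univ a, haA⟩
    obtain ⟨S, hShit, hScard⟩ := Nat.sInf_mem hSne
    set β := brambleOrder 𝓑 with hβ
    obtain ⟨X, hXk, hXsep⟩ := hksep S
    have hmin : ∀ S' : Set V, IsHitting 𝓑 S' → β ≤ S'.ncard :=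
      fun S' h => Nat.sInf_le ⟨S', h, rfl⟩
    have hβk : (β:ℝ) ≤ (k:ℝ) + c * (β:ℝ) := by
      by_cases hA : ∃ A ∈ 𝓑, ∀ x ∈ A, x ∉ X
      · obtain ⟨A, hA𝓑, hAX⟩ := hA
        obtain ⟨⟨v, hvA⟩⟩ := (h𝓑.1 A hA𝓑).nonempty
        have hvX : v ∉ X := hAX v hvA
        set S' := X ∪ (comp G X v ∩ (S \ X)) with hS'
        have hhit : IsHitting 𝓑 S' := by
          intro B hB
          by_cases hBX : ∃ x ∈ B, x ∈ X
          · obtain ⟨x, hxB, hxX⟩ := hBX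
            exact ⟨x, Or.inl hxX, hxB⟩
          · push_neg at hBX
            have hreach : ∀ b ∈ B, (delVerts G X).Reachable v b := by
              intro b hb
              rcases h𝓑.2 A hA𝓑 B hB with ⟨w, hwA, hwB⟩ | ⟨a, haA, b', hb'B, hadj⟩
              · exact (reach_of_connected G X A (h𝓑.1 A hA𝓑) hAX hvA hwA).trans
                  (reach_of_connected G X B (h𝓑.1 B hB) hBX hwB hb)
              · have h1 := reach_of_connected G X A (h𝓑.1 A hA𝓑) hAX hvA haA
                have h2 : (delVerts G X).Adj a b' := ⟨hadj, hAX a haA, hBX b' hb'B⟩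
                exact (h1.trans h2.reachable).trans
                  (reach_of_connected G X B (h𝓑.1 B hB) hBX hb'B hb)
            obtain ⟨s, hsS, hsB⟩ := hShit B hB
            exact ⟨s, Or.inr ⟨hreach s hsB, hsS, hBX s hsB⟩, hsB⟩
        have hcard : (β:ℝ) ≤ (S'.ncard : ℝ) := by exact_mod_cast hmin S' hhit
        have h1 : (S'.ncard : ℝ) ≤ (X.ncard : ℝ) + ((comp G X v ∩ (S \ X)).ncard : ℝ) := by
          exact_mod_cast Set.ncard_union_le _ _
        have h2 := hXsep v hvX
        rw [hScard] at h2
        have hβeq : β = sInf {n | ∃ S : Set V, IsHitting 𝓑 S ∧ S.ncard = n} := rfl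
        rw [← hβeq] at h2
        have hXk' : (X.ncard:ℝ) ≤ (k:ℝ) := by exact_mod_cast hXk
        linarith
      · push_neg at hA
        have hhit : IsHitting 𝓑 X := by
          intro B hB
          obtain ⟨x, hxB, hxX⟩ := hA B hB
          exact ⟨x, hxX, hxB⟩
        have h1 : β ≤ X.ncard := hmin X hhit
        have hcβ : (0:ℝ) ≤ c * (β:ℝ) := mul_nonneg (by linarith) (Nat.cast_nonneg _)
        have h2 : (β:ℝ) ≤ (k:ℝ) := by exact_mod_cast h1.trans hXk
        linarith
    rw [one_div_mul_eq_div, le_div_iff₀ hpos, mul_comm]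
    linarith
  set m := Nat.floor ((1/(1-c)) * (k:ℝ)) with hm
  have hnonneg : (0:ℝ) ≤ (1/(1-c)) * (k:ℝ) :=
    mul_nonneg (le_of_lt (by positivity)) (Nat.cast_nonneg _)
  have hsup : brambleNumber G ≤ m := by
    apply csSup_le
    · refine ⟨0, ∅, ⟨fun A hA => absurd hA (Set.notMem_empty A),
        fun A hA => absurd hA (Set.notMem_empty A)⟩, ?_⟩
      refine Nat.le_antisymm (Nat.sInf_le ⟨∅, fun A hA => absurd hA (Set.notMem_empty A), Set.ncard_empty V⟩) (Nat.zero_le _)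
    · rintro n ⟨𝓑, h𝓑, rfl⟩
      exact Nat.le_floor (key 𝓑 h𝓑)
  calc (brambleNumber G : ℝ) ≤ (m:ℝ) := by exact_mod_cast hsup
    _ ≤ (1/(1-c)) * (k:ℝ) := Nat.floor_le hnonneg

end TWPaper
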